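/- Let L ≥ m > 0 and let f : ℝⁿ → ℝ be twice continuously differentiable, attain its minimum at x*, and satisfy the sector condition (m(x−x*) − ∇f(x))ᵀ(L(x−x*) − ∇f(x)) ≤ 0 for all x ∈ ℝⁿ. Then the Hessian Δ = ∇²f(x*) satisfies m I ≤ Δ ≤ L I, i.e. for every v ∈ ℝⁿ, m‖v‖² ≤ vᵀΔv ≤ L‖v‖². -/

import Mathlib

open Real RealInnerProductSpace

private lemma sector_aux (m L s A N : ℝ) (hmL : m ≤ L) (hs : 0 ≤ s)
    (hQ : m * L * s - (m + L) * A + N ≤ 0) (hcs : A * A ≤ N * s) :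
    m * s ≤ A ∧ A ≤ L * s := by
  have hQs : (A - m * s) * (A - L * s) ≤ 0 := by
    nlinarith [mul_nonneg hs (neg_nonneg.2 hQ)]
  constructor <;> nlinarith [hQs, mul_nonneg (sub_nonneg.2 hmL) hs]

/-- If a twice continuously differentiable `f` attains its minimum at `x*`
and its gradient satisfies the sector condition with constants
`L ≥ m > 0`, then the Hessian `Δ = ∇²f(x*)` (the derivative of the gradient
at `x*`) satisfies `mI ≤ Δ ≤ LI` in the Loewner order:
`m‖v‖² ≤ vᵀΔv ≤ L‖v‖²` for every `v`. -/
theorem sector_condition_hessian_bounds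
    (n : ℕ) (m L : ℝ) (hm : 0 < m) (hmL : m ≤ L)
    (f : EuclideanSpace ℝ (Fin n) → ℝ) (hf : ContDiff ℝ 2 f)
    (xstar : EuclideanSpace ℝ (Fin n)) (hmin : ∀ x, f xstar ≤ f x)
    (hsector : ∀ x : EuclideanSpace ℝ (Fin n),
      ⟪m • (x - xstar) - gradient f x, L • (x - xstar) - gradient f x⟫ ≤ 0) :
    ∀ v : EuclideanSpace ℝ (Fin n),
      m * ‖v‖ ^ 2 ≤ ⟪fderiv ℝ (fun x => gradient f x) xstar v, v⟫ ∧
      ⟪fderiv ℝ (fun x => gradient f x) xstar v, v⟫ ≤ L * ‖v‖ ^ 2 := by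
  intro v
  -- the gradient is differentiable
  have hgd : Differentiable ℝ (gradient f) := by
    have h1 : ContDiff ℝ 1 (fderiv ℝ f) := hf.fderiv_right (by norm_num)
    have he : gradient f
        = fun x => (InnerProductSpace.toDual ℝ (EuclideanSpace ℝ (Fin n))).symm
            (fderiv ℝ f x) := rfl
    rw [he]
    exact fun x => ((InnerProductSpace.toDual ℝ
      (EuclideanSpace ℝ (Fin n))).symm.toContinuousLinearMap.differentiable.comp
      (h1.differentiable one_ne_zero)).differentiableAt
  -- the gradient vanishes at the minimizer
  have hloc : IsLocalMin f xstar := Filter.Eventually.of_forall hmin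
  have hf0 : fderiv ℝ f xstar = 0 := hloc.fderiv_eq_zero
  have hgrad0 : gradient f xstar = 0 := by
    show (InnerProductSpace.toDual ℝ (EuclideanSpace ℝ (Fin n))).symm
      (fderiv ℝ f xstar) = 0
    rw [hf0, map_zero]
  set H := fderiv ℝ (fun x => gradient f x) xstar with hHdef
  have hH : HasFDerivAt (gradient f) H xstar := (hgd xstar).hasFDerivAt
  set g : ℝ → EuclideanSpace ℝ (Fin n) := fun t => gradient f (xstar + t • v) with hg
  have hg0 : g 0 = 0 := by simp [hg, hgrad0]
  have hc : HasDerivAt (fun t : ℝ => xstar + t • v) v 0 := by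
    simpa using ((hasDerivAt_id (0 : ℝ)).smul_const v).const_add xstar
  have hgder : HasDerivAt g (H v) 0 := by
    have h' : HasFDerivAt (gradient f) H (xstar + (0 : ℝ) • v) := by
      simpa using hH
    exact h'.comp_hasDerivAt 0 hc
  have hslope : Filter.Tendsto (slope g 0) (nhdsWithin 0 {(0:ℝ)}ᶜ) (nhds (H v)) :=
    hasDerivAt_iff_tendsto_slope.mp hgder
  -- sector condition in the limit
  have key : ⟪m • v - H v, L • v - H v⟫ ≤ 0 := by
    have hcont : Filter.Tendsto (fun t => ⟪m • v - slope g 0 t, L • v - slope g 0 t⟫)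
        (nhdsWithin 0 {(0:ℝ)}ᶜ) (nhds ⟪m • v - H v, L • v - H v⟫) :=
      Filter.Tendsto.inner (tendsto_const_nhds.sub hslope) (tendsto_const_nhds.sub hslope)
    refine le_of_tendsto hcont ?_
    filter_upwards [self_mem_nhdsWithin] with t ht
    have ht0 : t ≠ 0 := ht
    have hsl : slope g 0 t = t⁻¹ • g t := by
      simp [slope_def_module, hg0]
    have hmt : (t⁻¹ * (m * t)) = m := by field_simp
    have hLt : (t⁻¹ * (L * t)) = L := by field_simp
    have e1 : m • v - t⁻¹ • g t = t⁻¹ • ((m * t) • v - g t) := by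
      rw [smul_sub, smul_smul, hmt]
    have e2 : L • v - t⁻¹ • g t = t⁻¹ • ((L * t) • v - g t) := by
      rw [smul_sub, smul_smul, hLt]
    have hs := hsector (xstar + t • v)
    have hx : xstar + t • v - xstar = t • v := by abel
    rw [hx] at hs
    have hs' : ⟪(m * t) • v - g t, (L * t) • v - g t⟫ ≤ 0 := by
      simpa [smul_smul, mul_comm] using hs
    rw [hsl, e1, e2, real_inner_smul_left, real_inner_smul_right]
    nlinarith [sq_nonneg t⁻¹, hs']
  -- algebra
  have hcomm : (⟪v, H v⟫ : ℝ) = ⟪H v, v⟫ := (real_inner_comm v (H v)).symm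
  have hexp : (⟪m • v - H v, L • v - H v⟫ : ℝ)
      = m * L * ‖v‖ ^ 2 - (m + L) * ⟪H v, v⟫ + ‖H v‖ ^ 2 := by
    simp only [inner_sub_left, inner_sub_right, real_inner_smul_left,
      real_inner_smul_right, real_inner_self_eq_norm_sq, hcomm]
    ring
  rw [hexp] at key
  have cs := real_inner_mul_inner_self_le (H v) v
  rw [real_inner_self_eq_norm_sq, real_inner_self_eq_norm_sq] at cs
  exact sector_aux m L (‖v‖ ^ 2) (⟪H v, v⟫) (‖H v‖ ^ 2) hmL (by positivity) key cs
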